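/- Let k = p_1^{α_1}···p_r^{α_r} be odd with distinct primes p_i. Assume for each prime p dividing k that s((ℤ/p^βℤ)^n) ≤ p(p^β - 1)·C(2n,n) + 1 for all β ≥ 1. Then s((ℤ/kℤ)^n) ≤ (p_1···p_r)(k-1)·C(2n,n) + 1. -/

import Mathlib

/-- The Erdős–Ginzburg–Ziv constant of a finite abelian group `A`. -/
noncomputable def EGZ (A : Type*) [AddCommMonoid A] : ℕ :=
  sInf {ℓ | ∀ S : Multiset A, ℓ ≤ Multiset.card S →
    ∃ T ≤ S, Multiset.card T = AddMonoid.exponent A ∧ T.sum = 0}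


def egzSet (A : Type*) [AddCommMonoid A] : Set ℕ :=
  {ℓ | ∀ S : Multiset A, ℓ ≤ Multiset.card S →
    ∃ T ≤ S, Multiset.card T = AddMonoid.exponent A ∧ T.sum = 0}


lemma EGZ_eq (A : Type*) [AddCommMonoid A] : EGZ A = sInf (egzSet A) := rfl

lemma egz_mono {A : Type*} [AddCommMonoid A] {ℓ ℓ' : ℕ} (h : ℓ ∈ egzSet A) (hle : ℓ ≤ ℓ') :
    ℓ' ∈ egzSet A := fun S hS => h S (hle.trans hS)

lemma mem_of_EGZ_le {A : Type*} [AddCommMonoid A] {ℓ : ℕ} (hne : (egzSet A).Nonempty)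
    (h : EGZ A ≤ ℓ) : ℓ ∈ egzSet A := egz_mono (Nat.sInf_mem hne) h

lemma egz_nonempty (A : Type*) [AddCommGroup A] [Fintype A] :
    Fintype.card A * (AddMonoid.exponent A - 1) + 1 ∈ egzSet A := by
  classical
  intro S hS
  have he : AddMonoid.exponent A ≠ 0 := AddMonoid.exponent_ne_zero_of_finite
  have : ∃ a : A, AddMonoid.exponent A ≤ S.count a := by
    by_contra h
    push_neg at h
    have h1 : Multiset.card S = ∑ a ∈ S.toFinset, S.count a :=
      (Multiset.toFinset_sum_count_eq S).symm
    have h2 : ∑ a ∈ S.toFinset, S.count a ≤ S.toFinset.card * (AddMonoid.exponent A - 1) := by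
      apply Finset.sum_le_card_nsmul
      intro a _
      have := h a
      omega
    have h3 : S.toFinset.card ≤ Fintype.card A := Finset.card_le_univ _
    have := Nat.mul_le_mul_right (AddMonoid.exponent A - 1) h3
    omega
  obtain ⟨a, ha⟩ := this
  refine ⟨Multiset.replicate (AddMonoid.exponent A) a, ?_, ?_, ?_⟩
  · rw [Multiset.le_iff_count]
    intro b
    rw [Multiset.count_replicate]
    split <;> simp_all
  · exact Multiset.card_replicate _ _
  · rw [Multiset.sum_replicate]
    exact AddMonoid.exponent_nsmul_eq_zero a

open Multiset

lemma lift_le_map {α β : Type*} (f : α → β) :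
    ∀ (S : Multiset α) (T : Multiset β), T ≤ S.map f → ∃ U ≤ S, U.map f = T := by
  classical
  intro S
  induction S using Multiset.induction with
  | empty => intro T hT; simp only [Multiset.map_zero, Multiset.le_zero] at hT
             exact ⟨0, le_refl _, by simp [hT]⟩
  | cons a S ih =>
      intro T hT
      rw [Multiset.map_cons] at hT
      by_cases hfa : f a ∈ T
      · have h1 : T.erase (f a) ≤ S.map f := Multiset.erase_le_iff_le_cons.2 hT
        obtain ⟨U, hU, hUm⟩ := ih _ h1
        refine ⟨a ::ₘ U, Multiset.cons_le_cons _ hU, ?_⟩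
        rw [Multiset.map_cons, hUm, Multiset.cons_erase hfa]
      · have h1 : T ≤ S.map f := (Multiset.le_cons_of_notMem hfa).1 hT
        obtain ⟨U, hU, hUm⟩ := ih _ h1
        exact ⟨U, hU.trans (Multiset.le_cons_self _ _), hUm⟩

lemma exponent_congr {A B : Type*} [AddCommMonoid A] [AddCommMonoid B] (e : A ≃+ B) :
    AddMonoid.exponent A = AddMonoid.exponent B :=
  Nat.dvd_antisymm
    (AddMonoidHom.exponent_dvd (f := e.symm.toAddMonoidHom) e.symm.surjective)
    (AddMonoidHom.exponent_dvd (f := e.toAddMonoidHom) e.surjective)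

lemma egzSet_congr {A B : Type*} [AddCommMonoid A] [AddCommMonoid B] (e : A ≃+ B) {ℓ : ℕ}
    (h : ℓ ∈ egzSet A) : ℓ ∈ egzSet B := by
  intro S hS
  obtain ⟨T, hT, hcard, hsum⟩ := h (S.map e.symm) (by rwa [Multiset.card_map])
  refine ⟨T.map e, ?_, ?_, ?_⟩
  · have := Multiset.map_le_map (f := e) hT
    rwa [Multiset.map_map, show (⇑e ∘ ⇑e.symm) = id from funext e.apply_symm_apply,
      Multiset.map_id] at this
  · rw [Multiset.card_map, hcard, exponent_congr e]
  · have : (Multiset.map (⇑e) T).sum = e T.sum := (map_multiset_sum e.toAddMonoidHom T).symm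
    rw [this, hsum]; exact _root_.map_zero e



lemma card_msum {α : Type*} (L : Multiset (Multiset α)) :
    Multiset.card L.sum = (L.map Multiset.card).sum := by
  induction L using Multiset.induction with
  | empty => simp
  | cons a L ih => simp [ih]

lemma sum_msum {α : Type*} [AddCommMonoid α] (L : Multiset (Multiset α)) :
    L.sum.sum = (L.map Multiset.sum).sum := by
  induction L using Multiset.induction with
  | empty => simp
  | cons a L ih => simp [ih]

lemma egz_extract {G B : Type*} [AddCommMonoid G] [AddCommMonoid B] (π : G →+ B)
    {b : ℕ} (hb : b ∈ egzSet B) :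
    ∀ (t : ℕ) (S : Multiset G),
      t * AddMonoid.exponent B + b ≤ Multiset.card S + AddMonoid.exponent B →
      ∃ L : Multiset (Multiset G), Multiset.card L = t ∧ L.sum ≤ S ∧
        ∀ T ∈ L, Multiset.card T = AddMonoid.exponent B ∧ π T.sum = 0 := by
  classical
  set e := AddMonoid.exponent B with he
  intro t
  induction t with
  | zero => intro S _; exact ⟨0, rfl, by simp, by simp⟩
  | succ t ih =>
      intro S hS
      rw [Nat.succ_mul] at hS
      have hbS : b ≤ Multiset.card S := by linarith [Nat.zero_le (t * e)]
      obtain ⟨T', hT', hcard', hsum'⟩ := hb (S.map π) (by rwa [Multiset.card_map])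
      obtain ⟨U, hU, hUm⟩ := lift_le_map π S T' hT'
      have hcardU : Multiset.card U = e := by
        rw [he, ← hcard', ← hUm, Multiset.card_map]
      have heS : e ≤ Multiset.card S := hcardU ▸ Multiset.card_le_card hU
      have hcardsub : Multiset.card (S - U) = Multiset.card S - e :=
        hcardU ▸ Multiset.card_sub hU
      obtain ⟨L, hLcard, hLle, hLprop⟩ := ih (S - U) (by omega)
      refine ⟨U ::ₘ L, by simp [hLcard], ?_, ?_⟩
      · rw [Multiset.sum_cons]
        calc U + L.sum ≤ U + (S - U) := add_le_add (le_refl U) hLle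
          _ = S := by rw [add_comm]; exact tsub_add_cancel_of_le hU
      · intro T hT
        rcases Multiset.mem_cons.1 hT with rfl | hT
        · refine ⟨hcardU, ?_⟩
          have : π T.sum = (T.map π).sum := map_multiset_sum π T
          rw [this, hUm, hsum']
        · exact hLprop T hT

lemma egz_prod {A B : Type*} [AddCommMonoid A] [AddCommMonoid B] {a b : ℕ}
    (ha : a + 1 ∈ egzSet A) (hb : b ∈ egzSet B)
    (hexp : AddMonoid.exponent (A × B) = AddMonoid.exponent A * AddMonoid.exponent B) :
    AddMonoid.exponent B * a + b ∈ egzSet (A × B) := by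
  intro S hS
  set e := AddMonoid.exponent B with he
  obtain ⟨L, hLcard, hLle, hLprop⟩ := egz_extract (AddMonoidHom.snd A B) hb (a + 1) S
    (by rw [Nat.succ_mul]; linarith [Nat.mul_comm e a, Nat.mul_comm a e])
  -- apply ha to first-coordinate sums of the chunks
  obtain ⟨W, hW, hWcard, hWsum⟩ := ha (L.map (fun T => T.sum.1))
    (by rw [Multiset.card_map, hLcard])
  obtain ⟨L', hL', hL'm⟩ := lift_le_map (fun T : Multiset (A × B) => T.sum.1) L W hW
  refine ⟨L'.sum, ?_, ?_, ?_⟩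
  · calc L'.sum ≤ L.sum := by
          obtain ⟨R, rfl⟩ := Multiset.le_iff_exists_add.1 hL'
          simp only [Multiset.sum_add]
          exact Multiset.le_add_right _ _
      _ ≤ S := hLle
  · rw [card_msum]
    have hrep : L'.map Multiset.card =
        Multiset.replicate (Multiset.card L') (AddMonoid.exponent B) := by
      apply Multiset.eq_replicate.2
      refine ⟨Multiset.card_map _ _, ?_⟩
      intro m hm
      obtain ⟨T, hT, rfl⟩ := Multiset.mem_map.1 hm
      exact (hLprop T (Multiset.mem_of_le hL' hT)).1
    have hcardL' : Multiset.card L' = AddMonoid.exponent A := by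
      rw [← hWcard, ← hL'm, Multiset.card_map]
    rw [hrep, Multiset.sum_replicate, smul_eq_mul, hcardL', hexp]
  · rw [sum_msum]
    apply Prod.ext
    · have h1 : ((L'.map Multiset.sum).sum).1 =
          ((L'.map Multiset.sum).map (AddMonoidHom.fst A B)).sum :=
        map_multiset_sum (AddMonoidHom.fst A B) _
      rw [h1, Multiset.map_map]
      have : (L'.map ((AddMonoidHom.fst A B : A × B → A) ∘ Multiset.sum)) = W := by
        rw [← hL'm]; rfl
      rw [this, hWsum]; rfl
    · have h2 : ((L'.map Multiset.sum).sum).2 =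
          ((L'.map Multiset.sum).map (AddMonoidHom.snd A B)).sum :=
        map_multiset_sum (AddMonoidHom.snd A B) _
      rw [h2]
      have : ((L'.map Multiset.sum).map (AddMonoidHom.snd A B)).sum = 0 := by
        apply Multiset.sum_eq_zero
        intro x hx
        rw [Multiset.map_map] at hx
        obtain ⟨T, hT, rfl⟩ := Multiset.mem_map.1 hx
        exact (hLprop T (Multiset.mem_of_le hL' hT)).2
      rw [this]; rfl


lemma exp_pi {M : Type*} [AddMonoid M] {n : ℕ} (hn : 1 ≤ n) :
    AddMonoid.exponent (Fin n → M) = AddMonoid.exponent M := by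
  rw [AddMonoid.exponent_pi]
  exact Nat.dvd_antisymm (Finset.lcm_dvd fun i _ => dvd_rfl)
    (Finset.dvd_lcm (Finset.mem_univ (⟨0, hn⟩ : Fin n)))

def piProdEquiv {n : ℕ} (X Y : Type*) [AddMonoid X] [AddMonoid Y] :
    (Fin n → X × Y) ≃+ (Fin n → X) × (Fin n → Y) where
  toEquiv := Equiv.arrowProdEquivProdArrow (Fin n) (fun _ => X) (fun _ => Y)
  map_add' f g := rfl

noncomputable def crtEquiv (n q m : ℕ) (h : q.Coprime m) :
    (Fin n → ZMod (q * m)) ≃+ (Fin n → ZMod q) × (Fin n → ZMod m) :=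
  (AddEquiv.piCongrRight fun _ => (ZMod.chineseRemainder h).toAddEquiv).trans
    (piProdEquiv _ _)


lemma egz_arith (p R q m C : ℕ) (hp : 1 ≤ p) (hR : 1 ≤ R) (hq : 1 ≤ q) (hm : 1 ≤ m) :
    m * (p * (q - 1) * C) + (R * (m - 1) * C + 1) ≤ p * R * (q * m - 1) * C + 1 := by
  obtain ⟨q', rfl⟩ := Nat.exists_eq_succ_of_ne_zero (by omega : q ≠ 0)
  obtain ⟨m', rfl⟩ := Nat.exists_eq_succ_of_ne_zero (by omega : m ≠ 0)
  have h1 : (q' + 1) * (m' + 1) - 1 = q' * m' + q' + m' := by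
    have : (q' + 1) * (m' + 1) = q' * m' + q' + m' + 1 := by ring
    omega
  rw [h1, Nat.succ_sub_one, Nat.succ_sub_one]
  have t1 : (m' + 1) * (p * q' * C) ≤ p * R * (q' * (m' + 1)) * C := by
    calc (m' + 1) * (p * q' * C) = (m' + 1) * (p * q' * C) * 1 := by ring
      _ ≤ (m' + 1) * (p * q' * C) * R := Nat.mul_le_mul_left _ hR
      _ = p * R * (q' * (m' + 1)) * C := by ring
  have t2 : R * m' * C ≤ p * (R * m' * C) := Nat.le_mul_of_pos_left _ hp
  calc (m' + 1) * (p * q' * C) + (R * m' * C + 1)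
      = ((m' + 1) * (p * q' * C) + R * m' * C) + 1 := by ring
    _ ≤ (p * R * (q' * (m' + 1)) * C + p * (R * m' * C)) + 1 := by
        exact Nat.add_le_add_right (Nat.add_le_add t1 t2) 1
    _ = p * R * (q' * m' + q' + m') * C + 1 := by ring

lemma egz_main (n : ℕ) (hn : 1 ≤ n) (C : ℕ) :
    ∀ k : ℕ, 1 ≤ k → Odd k →
    (∀ p : ℕ, p.Prime → p ∣ k → ∀ β : ℕ, 1 ≤ β →
        p * (p ^ β - 1) * C + 1 ∈ egzSet (Fin n → ZMod (p ^ β))) →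
    (∏ p ∈ k.primeFactors, p) * (k - 1) * C + 1 ∈ egzSet (Fin n → ZMod k) := by
  intro k
  induction k using Nat.strong_induction_on with
  | _ k ih =>
    intro hk1 hkodd hpp
    rcases eq_or_lt_of_le hk1 with h1 | h2
    · -- k = 1
      obtain rfl : k = 1 := h1.symm
      simp only [Nat.primeFactors_one, Finset.prod_empty, Nat.sub_self, Nat.mul_zero,
        Nat.zero_mul, Nat.mul_one, one_mul, mul_zero, zero_mul, zero_add]
      intro S hS
      have hS0 : S ≠ 0 := by
        intro h; rw [h] at hS; simp at hS
      obtain ⟨x, hx⟩ := Multiset.exists_mem_of_ne_zero hS0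
      refine ⟨{x}, Multiset.singleton_le.2 hx, ?_, ?_⟩
      · rw [Multiset.card_singleton, exp_pi hn, ZMod.exponent]
      · rw [Multiset.sum_singleton]
        exact Subsingleton.elim x 0
    · -- k ≥ 2
      have hk0 : k ≠ 0 := by omega
      have hkne1 : k ≠ 1 := by omega
      have hpprime : k.minFac.Prime := Nat.minFac_prime hkne1
      set p := k.minFac with hpdef
      have hpdvd : p ∣ k := Nat.minFac_dvd k
      have hp1 : 1 ≤ p := hpprime.one_lt.le
      have hα1 : 1 ≤ k.factorization p := hpprime.factorization_pos_of_dvd hk0 hpdvd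
      obtain ⟨m, hm⟩ : ∃ m, m = k / p ^ k.factorization p := ⟨_, rfl⟩
      have hqm : p ^ k.factorization p * m = k := by
        rw [hm]; exact Nat.ordProj_mul_ordCompl_eq_self k p
      have hpm : ¬ p ∣ m := by rw [hm]; exact Nat.not_dvd_ordCompl hpprime hk0
      have hq1 : 1 ≤ p ^ k.factorization p := Nat.one_le_pow _ _ hpprime.pos
      have hm1 : 1 ≤ m := by
        rcases Nat.eq_zero_or_pos m with h | h
        · exfalso; rw [h, mul_zero] at hqm; exact hk0 hqm.symm
        · exact h
      have hmk : m < k := by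
        have : p ^ k.factorization p ≥ 2 := by
          calc 2 ≤ p := hpprime.two_le
            _ = p ^ 1 := (pow_one p).symm
            _ ≤ p ^ k.factorization p := Nat.pow_le_pow_right hpprime.pos hα1
        nlinarith
      have hmodd : Odd m := by
        rcases Nat.even_or_odd m with hme | hmo
        · exfalso
          exact (Nat.not_even_iff_odd.2 hkodd) (hqm ▸ hme.mul_left _)
        · exact hmo
      have hmdvd : m ∣ k := hqm ▸ dvd_mul_left m (p ^ k.factorization p)
      have hcop : (p ^ k.factorization p).Coprime m :=
        Nat.Coprime.pow_left _ ((hpprime.coprime_iff_not_dvd).2 hpm)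
      -- inductive hypothesis on m
      have hb := ih m hmk hm1 hmodd (fun p' hp' hd β hβ => hpp p' hp' (hd.trans hmdvd) β hβ)
      -- prime power hypothesis
      have ha := hpp p hpprime hpdvd (k.factorization p) hα1
      -- exponents
      have hexpA : AddMonoid.exponent (Fin n → ZMod (p ^ k.factorization p)) =
          p ^ k.factorization p := by rw [exp_pi hn, ZMod.exponent]
      have hexpB : AddMonoid.exponent (Fin n → ZMod m) = m := by rw [exp_pi hn, ZMod.exponent]
      have hexpP : AddMonoid.exponent
            ((Fin n → ZMod (p ^ k.factorization p)) × (Fin n → ZMod m)) =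
          AddMonoid.exponent (Fin n → ZMod (p ^ k.factorization p)) *
            AddMonoid.exponent (Fin n → ZMod m) := by
        rw [AddMonoid.exponent_prod, hexpA, hexpB]
        exact Nat.Coprime.lcm_eq_mul hcop
      have key := egz_prod ha hb hexpP
      rw [hexpB] at key
      have key2 := egzSet_congr (crtEquiv n (p ^ k.factorization p) m hcop).symm key
      rw [← hqm]
      -- compute the radical
      have hrad : (∏ p' ∈ (p ^ k.factorization p * m).primeFactors, p') =
          p * ∏ p' ∈ m.primeFactors, p' := by
        rw [Nat.primeFactors_mul (by positivity) (by omega),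
          Nat.primeFactors_prime_pow (by omega) hpprime,
          Finset.prod_union (Finset.disjoint_singleton_left.2
            (fun hmem => hpm (Nat.dvd_of_mem_primeFactors hmem))),
          Finset.prod_singleton]
      rw [hrad]
      refine egz_mono key2 ?_
      have hR1 : 1 ≤ ∏ p' ∈ m.primeFactors, p' :=
        Finset.prod_pos (fun q hq => (Nat.prime_of_mem_primeFactors hq).pos)
      calc m * (p * (p ^ k.factorization p - 1) * C) +
            ((∏ p' ∈ m.primeFactors, p') * (m - 1) * C + 1)
          ≤ p * (∏ p' ∈ m.primeFactors, p') * (p ^ k.factorization p * m - 1) * C + 1 :=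
            egz_arith p _ _ m C hp1 hR1 hq1 hm1
        _ = p * (∏ p' ∈ m.primeFactors, p') * (p ^ k.factorization p * m - 1) * C + 1 := rfl

/-- If `k ≥ 2` is odd and the prime-power bound `s((ℤ/p^βℤ)^n) ≤ p(p^β-1)·C(2n,n) + 1` holds
for every prime `p ∣ k` and every `β ≥ 1`, then
`s((ℤ/kℤ)^n) ≤ (∏_{p ∣ k} p)·(k-1)·C(2n,n) + 1`. -/
theorem EGZ_composite (k n : ℕ) (hk : 2 ≤ k) (hodd : Odd k) (hn : 1 ≤ n)
    (hpp : ∀ p : ℕ, p.Prime → p ∣ k → ∀ β : ℕ, 1 ≤ β →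
      EGZ (Fin n → ZMod (p ^ β)) ≤ p * (p ^ β - 1) * Nat.choose (2 * n) n + 1) :
    EGZ (Fin n → ZMod k) ≤ (∏ p ∈ k.primeFactors, p) * (k - 1) * Nat.choose (2 * n) n + 1 := by
  have hpp' : ∀ p : ℕ, p.Prime → p ∣ k → ∀ β : ℕ, 1 ≤ β →
      p * (p ^ β - 1) * Nat.choose (2 * n) n + 1 ∈ egzSet (Fin n → ZMod (p ^ β)) := by
    intro p hp hpk β hβ
    haveI : NeZero (p ^ β) := ⟨pow_ne_zero _ hp.pos.ne'⟩
    exact mem_of_EGZ_le ⟨_, egz_nonempty (Fin n → ZMod (p ^ β))⟩ (hpp p hp hpk β hβ)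
  exact Nat.sInf_le
    (egz_main n hn (Nat.choose (2 * n) n) k (by omega) hodd hpp')
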